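/- Let S_1,...,S_h be closed convex sets in ℝ^n with empty total intersection, and suppose points x_1,...,x_h satisfy x_i ∈ ⋂_{j≠i} S_j. Let p be a point of the convex hull of {x_1,...,x_h} minimizing max_i dist(p, S_i). Then p ∉ S_i for every i. -/
import Mathlib


open Metric

theorem stmt4 {n h : ℕ} (S : Fin h → Set (EuclideanSpace ℝ (Fin n)))
    (hclosed : ∀ i, IsClosed (S i)) (hconv : ∀ i, Convex ℝ (S i))
    (hempty : (⋂ i, S i) = ∅)
    (x : Fin h → EuclideanSpace ℝ (Fin n))
    (hx : ∀ i j, j ≠ i → x i ∈ S j)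
    (p : EuclideanSpace ℝ (Fin n))
    (hp : p ∈ convexHull ℝ (Set.range x))
    (hmin : ∀ q ∈ convexHull ℝ (Set.range x),
      (⨆ i, infDist p (S i)) ≤ ⨆ i, infDist q (S i)) :
    ∀ i, p ∉ S i := by
  intro i₀ hpS
  -- every S j is nonempty
  have hne : ∀ j, (S j).Nonempty := by
    intro j
    by_cases hj : j = i₀
    · exact ⟨p, hj ▸ hpS⟩
    · exact ⟨x i₀, hx i₀ j hj⟩
  have hNE : Nonempty (Fin h) := ⟨i₀⟩
  have hbdd : BddAbove (Set.range fun i => infDist p (S i)) :=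
    Set.Finite.bddAbove (Set.finite_range _)
  set M : ℝ := ⨆ i, infDist p (S i) with hM
  have hle : ∀ j, infDist p (S j) ≤ M := fun j => le_ciSup hbdd j
  -- M > 0
  have hMpos : 0 < M := by
    rcases lt_or_ge 0 M with h' | h'
    · exact h'
    · exfalso
      have : p ∈ ⋂ j, S j := by
        refine Set.mem_iInter.2 fun j => ?_
        have h0 : infDist p (S j) = 0 :=
          le_antisymm (le_trans (hle j) h') infDist_nonneg
        exact (hclosed j).mem_iff_infDist_zero (hne j) |>.2 h0
      simp [hempty] at this
  set D : ℝ := dist p (x i₀) with hD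
  set t : ℝ := min (1/2) (M / (2 * (D + 1))) with ht
  have hDpos : 0 < D + 1 := by positivity
  have ht0 : 0 < t := by
    apply lt_min (by norm_num)
    positivity
  have ht1 : t ≤ 1/2 := min_le_left _ _
  have ht1' : t ≤ 1 := ht1.trans (by norm_num)
  set q : EuclideanSpace ℝ (Fin n) := (1 - t) • p + t • x i₀ with hq
  have hqhull : q ∈ convexHull ℝ (Set.range x) :=
    (convex_convexHull ℝ _) hp (subset_convexHull ℝ _ (Set.mem_range_self i₀))
      (by linarith) (le_of_lt ht0) (by ring)
  -- bound each infDist q (S j)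
  have hbound : ∀ j, infDist q (S j) ≤ max ((1 - t) * M) (t * D) := by
    intro j
    by_cases hj : j = i₀
    · subst hj
      have h1 : infDist q (S j) ≤ dist q p := infDist_le_dist_of_mem hpS
      have h2 : dist q p = t * D := by
        have : q - p = t • (x j - p) := by
          simp only [hq]
          module
        rw [dist_eq_norm, this, norm_smul, Real.norm_eq_abs, abs_of_pos ht0,
          ← dist_eq_norm, dist_comm, hD]
      exact le_max_of_le_right (h2 ▸ h1)
    · obtain ⟨z, hz, hdz⟩ := (hclosed j).exists_infDist_eq_dist (hne j) p
      have hw : (1 - t) • z + t • x i₀ ∈ S j :=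
        (hconv j) hz (hx i₀ j hj) (by linarith) (le_of_lt ht0) (by ring)
      have h1 : infDist q (S j) ≤ dist q ((1 - t) • z + t • x i₀) :=
        infDist_le_dist_of_mem hw
      have h2 : dist q ((1 - t) • z + t • x i₀) = (1 - t) * dist p z := by
        have : q - ((1 - t) • z + t • x i₀) = (1 - t) • (p - z) := by
          simp only [hq]; module
        rw [dist_eq_norm, this, norm_smul, Real.norm_eq_abs,
          abs_of_nonneg (by linarith : (0:ℝ) ≤ 1 - t), ← dist_eq_norm]
      have h3 : (1 - t) * dist p z ≤ (1 - t) * M := by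
        have := hle j
        rw [hdz] at this
        nlinarith
      exact le_max_of_le_left (by linarith [h2 ▸ h1])
  have hsup : (⨆ j, infDist q (S j)) ≤ max ((1 - t) * M) (t * D) :=
    ciSup_le hbound
  have hlt : max ((1 - t) * M) (t * D) < M := by
    apply max_lt
    · nlinarith
    · have htle : t ≤ M / (2 * (D + 1)) := min_le_right _ _
      have hDnn : 0 ≤ D := dist_nonneg
      have h2 : t * (2 * (D + 1)) ≤ M := by
        rw [le_div_iff₀ (by positivity)] at htle
        linarith
      nlinarith
  have := hmin q hqhull
  linarith [this, hsup]
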